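/- With the spherical ensemble kernel K_N on S² and C_N^2 = ∫_{S²} |K_N(x,y)|² d(x,y)² dσ(x), one has lim_{N→∞} C_N^2 = 4. -/

import Mathlib

open MeasureTheory Real Filter Topology

lemma my_arctan_le_self {x : ℝ} (hx : 0 ≤ x) : Real.arctan x ≤ x := by
  have h : MonotoneOn (fun y : ℝ => y - Real.arctan y) (Set.Ici 0) := by
    have hd : ∀ y : ℝ, HasDerivAt (fun y : ℝ => y - Real.arctan y)
        (1 - 1 / (1 + y ^ 2)) y := fun y =>
      (hasDerivAt_id y).sub (Real.hasDerivAt_arctan y)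
    apply monotoneOn_of_deriv_nonneg (convex_Ici 0)
    · exact (Continuous.sub continuous_id Real.continuous_arctan).continuousOn
    · exact fun y _ => ((hd y).differentiableAt).differentiableWithinAt
    · intro y hy
      rw [(hd y).deriv]
      have h1 : (0:ℝ) < 1 + y ^ 2 := by positivity
      rw [sub_nonneg, div_le_one h1]
      nlinarith
  have := h (Set.self_mem_Ici) hx hx
  simpa using this

lemma my_arctan_nonneg {x : ℝ} (hx : 0 ≤ x) : 0 ≤ Real.arctan x := by
  rw [← Real.arctan_zero]
  exact Real.arctan_strictMono.monotone hx

lemma my_arctan_lb {x : ℝ} (hx : 0 ≤ x) : x - x ^ 3 / 3 ≤ Real.arctan x := by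
  have h : MonotoneOn (fun y : ℝ => Real.arctan y - (y - y ^ 3 / 3)) (Set.Ici 0) := by
    have hd : ∀ y : ℝ, HasDerivAt (fun y : ℝ => Real.arctan y - (y - y ^ 3 / 3))
        (1 / (1 + y ^ 2) - (1 - 3 * y ^ 2 / 3)) y := fun y => by
      have h2 : HasDerivAt (fun y : ℝ => y - y ^ 3 / 3) (1 - 3 * y ^ 2 / 3) y := by
        have h4 := (hasDerivAt_id y).sub ((hasDerivAt_pow 3 y).div_const 3)
        simp at h4 ⊢
        exact h4
      exact (Real.hasDerivAt_arctan y).sub h2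
    apply monotoneOn_of_deriv_nonneg (convex_Ici 0)
    · exact (Real.continuous_arctan.sub (by continuity)).continuousOn
    · exact fun y _ => ((hd y).differentiableAt).differentiableWithinAt
    · intro y hy
      rw [(hd y).deriv]
      have h1 : (0:ℝ) < 1 + y ^ 2 := by positivity
      rw [sub_nonneg, le_div_iff₀ h1]
      nlinarith
  have := h (Set.self_mem_Ici) hx hx
  simp at this
  linarith

lemma intA (n : ℕ) (hn : 2 ≤ n) :
    IntegrableOn (fun r : ℝ => r / (1 + r ^ 2) ^ n) (Set.Ioi 0) ∧
    ∫ r in Set.Ioi (0:ℝ), r / (1 + r ^ 2) ^ n = 1 / (2 * ((n : ℝ) - 1)) := by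
  set c : ℝ := -(1 / (2 * ((n : ℝ) - 1))) with hc
  set g : ℝ → ℝ := fun x => c * ((1 + x ^ 2) ^ (n - 1))⁻¹ with hg
  have hn1 : ((n : ℝ) - 1) ≠ 0 := by
    have : (2:ℝ) ≤ (n:ℝ) := by exact_mod_cast hn
    linarith
  have hcast : ((n - 1 : ℕ) : ℝ) = (n : ℝ) - 1 := by
    have h1 : (1:ℕ) ≤ n := by omega
    push_cast [Nat.cast_sub h1]; ring
  have hderiv : ∀ x ∈ Set.Ici (0:ℝ), HasDerivAt g (x / (1 + x ^ 2) ^ n) x := by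
    intro x _
    have hp : (0:ℝ) < 1 + x ^ 2 := by positivity
    have h1 : HasDerivAt (fun x : ℝ => 1 + x ^ 2) (2 * x) x := by
      simpa using (hasDerivAt_pow 2 x).const_add 1
    have h2 : HasDerivAt (fun x : ℝ => (1 + x ^ 2) ^ (n - 1))
        (((n - 1 : ℕ) : ℝ) * (1 + x ^ 2) ^ (n - 1 - 1) * (2 * x)) x := h1.pow (n - 1)
    have h3 := (h2.inv (pow_ne_zero _ hp.ne')).const_mul c
    refine h3.congr_deriv ?_
    have e1 : ((1 + x ^ 2 : ℝ) ^ (n - 1)) ^ 2 = (1 + x ^ 2) ^ (n - 1 - 1) * (1 + x ^ 2) ^ n := by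
      rw [← pow_mul, ← pow_add]; congr 1; omega
    rw [e1, hcast, hc]
    have hne : ((1 + x ^ 2 : ℝ) ^ n) ≠ 0 := pow_ne_zero _ hp.ne'
    have hne2 : ((1 + x ^ 2 : ℝ) ^ (n - 1 - 1)) ≠ 0 := pow_ne_zero _ hp.ne'
    field_simp
  have hnonneg : ∀ x ∈ Set.Ioi (0:ℝ), 0 ≤ x / (1 + x ^ 2) ^ n := by
    intro x hx
    exact div_nonneg (le_of_lt hx) (by positivity)
  have htend : Tendsto g atTop (𝓝 0) := by
    have h1 : Tendsto (fun x : ℝ => (1 + x ^ 2) ^ (n - 1)) atTop atTop := by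
      exact (tendsto_pow_atTop (by omega : n - 1 ≠ 0)).comp
        (tendsto_atTop_add_const_left _ 1 (tendsto_pow_atTop two_ne_zero))
    have h2 := (h1.inv_tendsto_atTop).const_mul c
    simpa using h2
  refine ⟨integrableOn_Ioi_deriv_of_nonneg' hderiv hnonneg htend, ?_⟩
  rw [integral_Ioi_of_hasDerivAt_of_nonneg' hderiv hnonneg htend]
  simp [hg, hc]

lemma int3 (N : ℕ) (hN : 2 ≤ N) :
    IntegrableOn (fun r : ℝ => r ^ 3 / (1 + r ^ 2) ^ (N + 1)) (Set.Ioi 0) ∧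
    ∫ r in Set.Ioi (0:ℝ), r ^ 3 / (1 + r ^ 2) ^ (N + 1)
      = 1 / (2 * ((N : ℝ) - 1)) - 1 / (2 * (N : ℝ)) := by
  obtain ⟨iN, vN⟩ := intA N hN
  obtain ⟨iN1, vN1⟩ := intA (N + 1) (by omega)
  have hfun : ∀ r : ℝ, r ^ 3 / (1 + r ^ 2) ^ (N + 1)
      = r / (1 + r ^ 2) ^ N - r / (1 + r ^ 2) ^ (N + 1) := by
    intro r
    have h : (0:ℝ) < 1 + r ^ 2 := by positivity
    rw [pow_succ]
    field_simp
    ring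
  constructor
  · exact (iN.sub iN1).congr (Filter.Eventually.of_forall fun r => by
      simp [Pi.sub_apply, (hfun r).symm])
  · rw [show (∫ r in Set.Ioi (0:ℝ), r ^ 3 / (1 + r ^ 2) ^ (N + 1))
        = ∫ r in Set.Ioi (0:ℝ), (r / (1 + r ^ 2) ^ N - r / (1 + r ^ 2) ^ (N + 1)) from
      integral_congr_ae (Filter.Eventually.of_forall fun r => hfun r)]
    rw [integral_sub iN iN1, vN, vN1]
    push_cast
    ring

lemma int5 (M : ℕ) (hM : 2 ≤ M) :
    IntegrableOn (fun r : ℝ => r ^ 5 / (1 + r ^ 2) ^ (M + 2)) (Set.Ioi 0) ∧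
    ∫ r in Set.Ioi (0:ℝ), r ^ 5 / (1 + r ^ 2) ^ (M + 2)
      = 1 / (2 * ((M : ℝ) - 1)) - 2 * (1 / (2 * (M : ℝ))) + 1 / (2 * ((M : ℝ) + 1)) := by
  obtain ⟨iM, vM⟩ := intA M hM
  obtain ⟨iM1, vM1⟩ := intA (M + 1) (by omega)
  obtain ⟨iM2, vM2⟩ := intA (M + 2) (by omega)
  have hfun : ∀ r : ℝ, r ^ 5 / (1 + r ^ 2) ^ (M + 2)
      = r / (1 + r ^ 2) ^ M - 2 * (r / (1 + r ^ 2) ^ (M + 1)) + r / (1 + r ^ 2) ^ (M + 2) := by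
    intro r
    have h : (0:ℝ) < 1 + r ^ 2 := by positivity
    rw [pow_succ, pow_succ]
    field_simp
    ring
  have icomb : IntegrableOn
      (fun r : ℝ => r / (1 + r ^ 2) ^ M - 2 * (r / (1 + r ^ 2) ^ (M + 1))
        + r / (1 + r ^ 2) ^ (M + 2)) (Set.Ioi 0) :=
    (iM.sub (iM1.const_mul 2)).add iM2
  constructor
  · exact icomb.congr (Filter.Eventually.of_forall fun r => (hfun r).symm)
  · rw [show (∫ r in Set.Ioi (0:ℝ), r ^ 5 / (1 + r ^ 2) ^ (M + 2))
        = ∫ r in Set.Ioi (0:ℝ), (r / (1 + r ^ 2) ^ M - 2 * (r / (1 + r ^ 2) ^ (M + 1))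
          + r / (1 + r ^ 2) ^ (M + 2)) from
      integral_congr_ae (Filter.Eventually.of_forall fun r => hfun r)]
    have i_sub : IntegrableOn
        (fun r : ℝ => r / (1 + r ^ 2) ^ M - 2 * (r / (1 + r ^ 2) ^ (M + 1))) (Set.Ioi 0) :=
      iM.sub (iM1.const_mul 2)
    have i_mul : IntegrableOn
        (fun r : ℝ => 2 * (r / (1 + r ^ 2) ^ (M + 1))) (Set.Ioi 0) := iM1.const_mul 2
    rw [integral_add i_sub iM2, integral_sub iM i_mul,
      MeasureTheory.integral_const_mul, vM, vM1, vM2]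
    push_cast
    ring

lemma main_bounds (N : ℕ) (hN : 3 ≤ N) :
    2 * (N : ℝ) ^ 2 * (4 * (1 / (2 * ((N : ℝ) - 1)) - 1 / (2 * (N : ℝ)))
        - 4 * (1 / (2 * ((N : ℝ) - 2)) - 2 * (1 / (2 * ((N : ℝ) - 1))) + 1 / (2 * (N : ℝ))))
      ≤ 2 * (N : ℝ) ^ 2 *
        ∫ r in Set.Ioi (0 : ℝ), r * (2 * Real.arctan r) ^ 2 / (1 + r ^ 2) ^ (N + 1) ∧
    2 * (N : ℝ) ^ 2 *
        (∫ r in Set.Ioi (0 : ℝ), r * (2 * Real.arctan r) ^ 2 / (1 + r ^ 2) ^ (N + 1))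
      ≤ 2 * (N : ℝ) ^ 2 * (4 * (1 / (2 * ((N : ℝ) - 1)) - 1 / (2 * (N : ℝ)))) := by
  obtain ⟨i3, v3⟩ := int3 N (by omega)
  have hcast : ((N - 1 : ℕ) : ℝ) = (N : ℝ) - 1 := by
    push_cast [Nat.cast_sub (show 1 ≤ N by omega)]; ring
  obtain ⟨i5, v5⟩ := (by
    have h := int5 (N - 1) (by omega)
    rwa [show N - 1 + 2 = N + 1 from by omega] at h :
    IntegrableOn (fun r : ℝ => r ^ 5 / (1 + r ^ 2) ^ (N + 1)) (Set.Ioi 0) ∧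
    ∫ r in Set.Ioi (0:ℝ), r ^ 5 / (1 + r ^ 2) ^ (N + 1)
      = 1 / (2 * (((N - 1 : ℕ) : ℝ) - 1)) - 2 * (1 / (2 * ((N - 1 : ℕ) : ℝ)))
        + 1 / (2 * (((N - 1 : ℕ) : ℝ) + 1)))
  rw [hcast] at v5
  have v5' : ∫ r in Set.Ioi (0:ℝ), r ^ 5 / (1 + r ^ 2) ^ (N + 1)
      = 1 / (2 * ((N : ℝ) - 2)) - 2 * (1 / (2 * ((N : ℝ) - 1))) + 1 / (2 * (N : ℝ)) := by
    rw [v5]; ring_nf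
  -- integrand facts
  set f : ℝ → ℝ := fun r => r * (2 * Real.arctan r) ^ 2 / (1 + r ^ 2) ^ (N + 1) with hf
  have hcont : Continuous f := by
    apply Continuous.div
    · exact continuous_id.mul ((continuous_const.mul Real.continuous_arctan).pow 2)
    · continuity
    · intro x; positivity
  have hub : ∀ r ∈ Set.Ioi (0:ℝ), f r ≤ 4 * (r ^ 3 / (1 + r ^ 2) ^ (N + 1)) := by
    intro r hr
    have hr' : (0:ℝ) < r := hr
    have hd : (0:ℝ) < (1 + r ^ 2) ^ (N + 1) := by positivity
    have ha1 : Real.arctan r ≤ r := my_arctan_le_self hr'.le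
    have ha0 : 0 ≤ Real.arctan r := my_arctan_nonneg hr'.le
    rw [hf, show (4:ℝ) * (r ^ 3 / (1 + r ^ 2) ^ (N + 1)) = 4 * r ^ 3 / (1 + r ^ 2) ^ (N + 1)
      from by ring, div_le_div_iff_of_pos_right hd]
    nlinarith [mul_le_mul_of_nonneg_left (mul_le_mul ha1 ha1 ha0 (ha0.trans ha1)) hr'.le]
  have hlb : ∀ r ∈ Set.Ioi (0:ℝ),
      4 * (r ^ 3 / (1 + r ^ 2) ^ (N + 1)) - 4 * (r ^ 5 / (1 + r ^ 2) ^ (N + 1)) ≤ f r := by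
    intro r hr
    have hr' : (0:ℝ) < r := hr
    have hd : (0:ℝ) < (1 + r ^ 2) ^ (N + 1) := by positivity
    have ha0 : 0 ≤ Real.arctan r := my_arctan_nonneg hr'.le
    rw [hf, show (4:ℝ) * (r ^ 3 / (1 + r ^ 2) ^ (N + 1)) - 4 * (r ^ 5 / (1 + r ^ 2) ^ (N + 1))
        = (4 * r ^ 3 - 4 * r ^ 5) / (1 + r ^ 2) ^ (N + 1) from by ring,
      div_le_div_iff_of_pos_right hd]
    rcases le_or_gt r 1 with h1 | h1
    · have hlow : r - r ^ 3 / 3 ≤ Real.arctan r := my_arctan_lb hr'.le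
      have hlow0 : 0 ≤ r - r ^ 3 / 3 := by nlinarith
      nlinarith [mul_le_mul_of_nonneg_left (mul_le_mul hlow hlow hlow0 ha0) hr'.le,
        pow_nonneg hr'.le 5, pow_nonneg hr'.le 7]
    · have hp : r ^ 3 ≤ r ^ 5 := pow_le_pow_right₀ h1.le (by norm_num)
      nlinarith [mul_nonneg hr'.le (sq_nonneg (2 * Real.arctan r))]
  have hf_int : IntegrableOn f (Set.Ioi 0) := by
    apply Integrable.mono' (i3.const_mul 4) hcont.aestronglyMeasurable.restrict
    rw [ae_restrict_iff' measurableSet_Ioi]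
    refine Filter.Eventually.of_forall fun r hr => ?_
    have hr' : (0:ℝ) < r := hr
    rw [Real.norm_eq_abs, abs_of_nonneg]
    · exact hub r hr
    · exact div_nonneg (mul_nonneg hr'.le (sq_nonneg _)) (by positivity)
  have iup : IntegrableOn (fun r : ℝ => 4 * (r ^ 3 / (1 + r ^ 2) ^ (N + 1))) (Set.Ioi 0) :=
    i3.const_mul 4
  have ilow : IntegrableOn (fun r : ℝ =>
      4 * (r ^ 3 / (1 + r ^ 2) ^ (N + 1)) - 4 * (r ^ 5 / (1 + r ^ 2) ^ (N + 1))) (Set.Ioi 0) :=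
    (i3.const_mul 4).sub (i5.const_mul 4)
  have hI1 : (∫ r in Set.Ioi (0:ℝ), f r)
      ≤ ∫ r in Set.Ioi (0:ℝ), 4 * (r ^ 3 / (1 + r ^ 2) ^ (N + 1)) :=
    setIntegral_mono_on hf_int iup measurableSet_Ioi hub
  have hI2 : (∫ r in Set.Ioi (0:ℝ),
        (4 * (r ^ 3 / (1 + r ^ 2) ^ (N + 1)) - 4 * (r ^ 5 / (1 + r ^ 2) ^ (N + 1))))
      ≤ ∫ r in Set.Ioi (0:ℝ), f r :=
    setIntegral_mono_on ilow hf_int measurableSet_Ioi hlb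
  rw [MeasureTheory.integral_const_mul, v3] at hI1
  rw [integral_sub (i3.const_mul 4) (i5.const_mul 4), MeasureTheory.integral_const_mul,
    MeasureTheory.integral_const_mul, v3, v5'] at hI2
  have hpos : (0:ℝ) ≤ 2 * (N : ℝ) ^ 2 := by positivity
  constructor
  · calc 2 * (N : ℝ) ^ 2 * (4 * (1 / (2 * ((N : ℝ) - 1)) - 1 / (2 * (N : ℝ)))
        - 4 * (1 / (2 * ((N : ℝ) - 2)) - 2 * (1 / (2 * ((N : ℝ) - 1))) + 1 / (2 * (N : ℝ))))
        ≤ 2 * (N : ℝ) ^ 2 * ∫ r in Set.Ioi (0:ℝ), f r := mul_le_mul_of_nonneg_left hI2 hpos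
    _ = _ := rfl
  · exact mul_le_mul_of_nonneg_left hI1 hpos

/-- For the spherical ensemble on `S²`,
`C_N^2 = 2N² ∫₀^∞ r (2 arctan r)²(1+r²)^{−(N+1)} dr` satisfies
`lim_{N→∞} C_N^2 = 4`. -/
theorem spherical_ensemble_CN2 :
    Tendsto (fun N : ℕ =>
        2 * (N : ℝ) ^ 2 *
          ∫ r in Set.Ioi (0 : ℝ), r * (2 * Real.arctan r) ^ 2 / (1 + r ^ 2) ^ (N + 1))
      atTop (nhds 4) := by
  have hcast : Tendsto (fun N : ℕ => (N : ℝ)) atTop atTop := tendsto_natCast_atTop_atTop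
  have hinv1 : Tendsto (fun N : ℕ => ((N : ℝ) - 1)⁻¹) atTop (𝓝 0) := by
    apply tendsto_inv_atTop_zero.comp
    exact (tendsto_atTop_add_const_right atTop (-1) hcast).congr (fun N => by ring)
  have hinv2 : Tendsto (fun N : ℕ => ((N : ℝ) - 2)⁻¹) atTop (𝓝 0) := by
    apply tendsto_inv_atTop_zero.comp
    exact (tendsto_atTop_add_const_right atTop (-2) hcast).congr (fun N => by ring)
  have hU : Tendsto (fun N : ℕ =>
      2 * (N : ℝ) ^ 2 * (4 * (1 / (2 * ((N : ℝ) - 1)) - 1 / (2 * (N : ℝ)))))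
      atTop (𝓝 4) := by
    have h : Tendsto (fun N : ℕ => 4 + 4 * ((N : ℝ) - 1)⁻¹) atTop (𝓝 (4 + 4 * 0)) :=
      tendsto_const_nhds.add (hinv1.const_mul 4)
    norm_num at h
    apply Tendsto.congr' _ h
    filter_upwards [eventually_ge_atTop 2] with N hN
    have h2 : (2:ℝ) ≤ (N:ℝ) := by exact_mod_cast hN
    have hN0 : (N:ℝ) ≠ 0 := by linarith
    have hN1 : (N:ℝ) - 1 ≠ 0 := by linarith
    field_simp
    ring
  have hL : Tendsto (fun N : ℕ =>
      2 * (N : ℝ) ^ 2 * (4 * (1 / (2 * ((N : ℝ) - 1)) - 1 / (2 * (N : ℝ)))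
        - 4 * (1 / (2 * ((N : ℝ) - 2)) - 2 * (1 / (2 * ((N : ℝ) - 1))) + 1 / (2 * (N : ℝ)))))
      atTop (𝓝 4) := by
    have h : Tendsto (fun N : ℕ =>
        (4 + 4 * ((N : ℝ) - 1)⁻¹) - 8 * (1 + ((N : ℝ) - 1)⁻¹) * ((N : ℝ) - 2)⁻¹)
        atTop (𝓝 ((4 + 4 * 0) - 8 * (1 + 0) * 0)) := by
      exact (tendsto_const_nhds.add (hinv1.const_mul 4)).sub
        (((tendsto_const_nhds.mul (tendsto_const_nhds.add hinv1))).mul hinv2)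
    norm_num at h
    apply Tendsto.congr' _ h
    filter_upwards [eventually_ge_atTop 3] with N hN
    have h3 : (3:ℝ) ≤ (N:ℝ) := by exact_mod_cast hN
    have hN0 : (N:ℝ) ≠ 0 := by linarith
    have hN1 : (N:ℝ) - 1 ≠ 0 := by linarith
    have hN2 : (N:ℝ) - 2 ≠ 0 := by linarith
    field_simp
    ring
  refine tendsto_of_tendsto_of_tendsto_of_le_of_le' hL hU ?_ ?_
  · filter_upwards [eventually_ge_atTop 3] with N hN
    exact (main_bounds N hN).1
  · filter_upwards [eventually_ge_atTop 3] with N hN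
    exact (main_bounds N hN).2
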